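/- Quantitative lower bound on the small divisors: let ω ∈ ℝ² satisfy the Diophantine condition with constants ν ∈ (0,1] and τ ≥ 1, and let λ ∈ ℝ with 0 < λ < 1. Then for every k ∈ ℤ² \ {0}, |e^{2πi ω·k} − (1+λ) + λ e^{−2πi ω·k}| ≥ 4(1−λ) ν |k|^{−τ}, where |k| = max(|k₁|,|k₂|). -/

import Mathlib

open Complex Real

/-- `|sin (π x)| ≥ 2 * |x - round x|`. -/
lemma two_dist_le_abs_sin_pi (x : ℝ) :
    2 * |x - round x| ≤ |Real.sin (π * x)| := by
  set n : ℤ := round x with hn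
  have hd : |x - n| ≤ 1 / 2 := abs_sub_round x
  have hsin : Real.sin (π * x) = Real.sin (π * (x - n)) * Real.cos (n * π) := by
    have : π * x = π * (x - n) + n * π := by ring
    rw [this, Real.sin_add, Real.sin_int_mul_pi, mul_zero, add_zero]
  have habs : |Real.sin (π * x)| = |Real.sin (π * (x - n))| := by
    rw [hsin, abs_mul, Real.abs_cos_int_mul_pi, mul_one]
  rw [habs]
  have h1 : |Real.sin (π * (x - n))| = Real.sin (π * |x - n|) := by
    rcases abs_cases (x - n) with ⟨h, h'⟩ | ⟨h, h'⟩
    · rw [h, _root_.abs_of_nonneg]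
      exact Real.sin_nonneg_of_nonneg_of_le_pi (by positivity)
        (by nlinarith [Real.pi_pos, h ▸ hd, abs_nonneg (x - n)])
    · rw [h, mul_neg, Real.sin_neg, _root_.abs_of_nonpos]
      have h0 : (0:ℝ) ≤ Real.sin (π * (-(x - n))) :=
        Real.sin_nonneg_of_nonneg_of_le_pi (by nlinarith [Real.pi_pos])
          (by nlinarith [Real.pi_pos, h ▸ hd])
      rw [mul_neg, Real.sin_neg] at h0
      linarith
  rw [h1]
  have h2 : 2 / π * (π * |x - n|) ≤ Real.sin (π * |x - n|) :=
    Real.mul_le_sin (by positivity)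
      (by nlinarith [Real.pi_pos, hd, abs_nonneg (x - n)])
  have hπ : (0:ℝ) < π := Real.pi_pos
  calc 2 * |x - n| = 2 / π * (π * |x - n|) := by field_simp
    _ ≤ _ := h2

/-- Quantitative lower bound on the small divisors for Diophantine frequencies. -/
theorem small_divisor_lower_bound (ω : ℝ × ℝ) (ν τ l : ℝ)
    (hν : 0 < ν) (hν1 : ν ≤ 1) (hτ : 1 ≤ τ) (hl0 : 0 < l) (hl1 : l < 1)
    (hdio : ∀ m₁ : ℤ × ℤ, m₁ ≠ 0 → ∀ m₂ : ℤ,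
      ν * ((max m₁.1.natAbs m₁.2.natAbs : ℕ) : ℝ) ^ (-τ) ≤
        |(m₁.1 : ℝ) * ω.1 + (m₁.2 : ℝ) * ω.2 + m₂|) :
    ∀ k : ℤ × ℤ, k ≠ 0 →
      4 * (1 - l) * ν * ((max k.1.natAbs k.2.natAbs : ℕ) : ℝ) ^ (-τ) ≤
        ‖(Complex.exp (2 * π * Complex.I * ((ω.1 : ℂ) * k.1 + (ω.2 : ℂ) * k.2))
            - (1 + (l : ℂ))
            + (l : ℂ) * Complex.exp (-(2 * π * Complex.I * ((ω.1 : ℂ) * k.1 + (ω.2 : ℂ) * k.2))))‖ := by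
  intro k hk
  set x : ℝ := ω.1 * k.1 + ω.2 * k.2 with hx
  set K : ℝ := ((max k.1.natAbs k.2.natAbs : ℕ) : ℝ) with hK
  -- Diophantine bound on the distance to the nearest integer
  have hdist : ν * K ^ (-τ) ≤ |x - round x| := by
    have := hdio k hk (-(round x))
    calc ν * K ^ (-τ) ≤ |(k.1 : ℝ) * ω.1 + (k.2 : ℝ) * ω.2 + (-(round x) : ℤ)| := this
      _ = |x - round x| := by push_cast; congr 1; simp only [hx]; ring
  -- rewrite the exponent
  set z : ℂ := 2 * π * Complex.I * ((ω.1 : ℂ) * k.1 + (ω.2 : ℂ) * k.2) with hz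
  have hz' : z = ((2 * π * x : ℝ) : ℂ) * Complex.I := by
    rw [hz, hx]; push_cast; ring
  -- factorization
  have hfact : Complex.exp z - (1 + (l : ℂ)) + (l : ℂ) * Complex.exp (-z)
      = (Complex.exp z - 1) * (1 - (l : ℂ) * Complex.exp (-z)) := by
    have h1 : Complex.exp z * Complex.exp (-z) = 1 := by
      rw [← Complex.exp_add]; simp
    calc Complex.exp z - (1 + (l : ℂ)) + (l : ℂ) * Complex.exp (-z)
        = Complex.exp z - (l : ℂ) * (Complex.exp z * Complex.exp (-z)) - 1
            + (l : ℂ) * Complex.exp (-z) := by rw [h1]; ring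
      _ = (Complex.exp z - 1) * (1 - (l : ℂ) * Complex.exp (-z)) := by ring
  rw [hfact, norm_mul]
  -- second factor
  have habs_exp_neg : ‖Complex.exp (-z)‖ = 1 := by
    rw [hz']
    have : -(((2 * π * x : ℝ) : ℂ) * Complex.I) = ((-(2 * π * x) : ℝ) : ℂ) * Complex.I := by
      push_cast; ring
    rw [this, Complex.norm_exp_ofReal_mul_I]
  have h2nd : 1 - l ≤ ‖1 - (l : ℂ) * Complex.exp (-z)‖ := by
    have := norm_sub_norm_le (1:ℂ) ((l : ℂ) * Complex.exp (-z))
    rw [norm_one, norm_mul,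
      Complex.norm_real, Real.norm_eq_abs, habs_exp_neg, mul_one, _root_.abs_of_pos hl0] at this
    exact this
  -- first factor: |exp z - 1| = 2 |sin (π x)|
  have h1st : ‖Complex.exp z - 1‖ = 2 * |Real.sin (π * x)| := by
    rw [hz', Complex.exp_mul_I]
    have : Complex.cos ((2 * π * x : ℝ) : ℂ) + Complex.sin ((2 * π * x : ℝ) : ℂ) * Complex.I - 1
        = Complex.ofReal (Real.cos (2 * π * x) - 1) + Complex.ofReal (Real.sin (2 * π * x)) * Complex.I := by
      push_cast [Complex.ofReal_cos, Complex.ofReal_sin]; ring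
    rw [this]
    rw [Complex.norm_def, Complex.normSq_add_mul_I]
    have hc : Real.cos (2 * π * x) = 1 - 2 * Real.sin (π * x) ^ 2 := by
      have := Real.cos_two_mul' (π * x)
      have hs := Real.sin_sq_add_cos_sq (π * x)
      have h2 : 2 * π * x = 2 * (π * x) := by ring
      rw [h2, this]; nlinarith
    have : (Real.cos (2 * π * x) - 1) ^ 2 + Real.sin (2 * π * x) ^ 2
        = (2 * |Real.sin (π * x)|) ^ 2 := by
      have hs2 : Real.sin (2 * π * x) = 2 * Real.sin (π * x) * Real.cos (π * x) := by
        have h2 : 2 * π * x = 2 * (π * x) := by ring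
        rw [h2, Real.sin_two_mul]
      have hsq : |Real.sin (π * x)| ^ 2 = Real.sin (π * x) ^ 2 := sq_abs _
      have hpy := Real.sin_sq_add_cos_sq (π * x)
      rw [hc, hs2]; nlinarith
    rw [this, Real.sqrt_sq (by positivity)]
  rw [h1st]
  -- conclude
  have hsin : 2 * (ν * K ^ (-τ)) ≤ |Real.sin (π * x)| :=
    le_trans (by linarith [two_dist_le_abs_sin_pi x, hdist,
      mul_le_mul_of_nonneg_left hdist (by norm_num : (0:ℝ) ≤ 2)]) (two_dist_le_abs_sin_pi x)
  have hKpos : 0 < K ^ (-τ) := by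
    have hk' : k.1 ≠ 0 ∨ k.2 ≠ 0 := by
      by_contra h
      push_neg at h
      exact hk (Prod.ext h.1 h.2)
    have hpos : 0 < max k.1.natAbs k.2.natAbs := by
      rcases hk' with h | h
      · exact lt_max_of_lt_left (Int.natAbs_pos.2 h)
      · exact lt_max_of_lt_right (Int.natAbs_pos.2 h)
    have : 0 < K := by rw [hK]; exact_mod_cast hpos
    positivity
  calc 4 * (1 - l) * ν * K ^ (-τ)
      = (2 * (2 * (ν * K ^ (-τ)))) * (1 - l) := by ring
    _ ≤ (2 * |Real.sin (π * x)|) * ‖1 - (l : ℂ) * Complex.exp (-z)‖ := by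
        apply mul_le_mul _ h2nd (by linarith) (by positivity)
        · linarith [mul_le_mul_of_nonneg_left hsin (by norm_num : (0:ℝ) ≤ 2)]
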